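/- Lieb's variational principle (finite-dimensional form): for every integer N with 1 ≤ N ≤ d, the infimum of ℰ_HF(γ) over all admissible γ with Tr γ = N equals the infimum of ℰ_HF(γ) over all orthogonal projection matrices γ (γ = γᴴ and γ² = γ) with Tr γ = N. In other words, relaxing the projection constraint γ = γ² to the operator inequalities 0 ⪯ γ ⪯ 1 does not change the Hartree–Fock ground state energy. -/

import Mathlib

open Matrix
open scoped Kronecker ComplexOrder

/-- The exchange matrix `Ex[(i,j),(k,l)] = δ_{il} δ_{jk}` on `ℂ^d ⊗ ℂ^d`. -/
noncomputable def exchangeMatrix (d : ℕ) : Matrix (Fin d × Fin d) (Fin d × Fin d) ℂ :=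
  Matrix.of fun p q => if p.1 = q.2 ∧ p.2 = q.1 then 1 else 0

/-- The Hartree–Fock energy functional
`ℰ_HF(γ) = Re Tr(h γ) + (1/2) Re Tr(V (1 − Ex)(γ ⊗ γ))`. -/
noncomputable def hfEnergy {d : ℕ} (h : Matrix (Fin d) (Fin d) ℂ)
    (V : Matrix (Fin d × Fin d) (Fin d × Fin d) ℂ)
    (γ : Matrix (Fin d) (Fin d) ℂ) : ℝ :=
  ((h * γ).trace).re
    + (1 / 2) * ((V * ((1 : Matrix (Fin d × Fin d) (Fin d × Fin d) ℂ) - exchangeMatrix d)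
        * (γ ⊗ₖ γ)).trace).re

/-- `γ` is admissible iff it is Hermitian with `0 ⪯ γ ⪯ 1`. -/
def HFAdmissible {d : ℕ} (γ : Matrix (Fin d) (Fin d) ℂ) : Prop :=
  γ.PosSemidef ∧ ((1 : Matrix (Fin d) (Fin d) ℂ) - γ).PosSemidef

lemma exchangeMatrix_mul_apply {d : ℕ} (X : Matrix (Fin d × Fin d) (Fin d × Fin d) ℂ)
    (q p : Fin d × Fin d) : (exchangeMatrix d * X) q p = X (q.2, q.1) p := by
  rw [mul_apply, Finset.sum_eq_single (q.2, q.1)]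
  · simp [exchangeMatrix]
  · intro r _ hr
    have : ¬(q.1 = r.2 ∧ q.2 = r.1) := by
      rintro ⟨h1, h2⟩; exact hr (Prod.ext h2.symm h1.symm)
    simp [exchangeMatrix, this]
  · simp

lemma key_trace {d : ℕ} (V : Matrix (Fin d × Fin d) (Fin d × Fin d) ℂ) (u v : Fin d → ℂ) :
    (V * (1 - exchangeMatrix d) *
      ((vecMulVec u (star u) - vecMulVec v (star v)) ⊗ₖ (vecMulVec u (star u) - vecMulVec v (star v)))).trace
    = -(star (fun p : Fin d × Fin d => u p.1 * v p.2 - v p.1 * u p.2) ⬝ᵥ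
        V *ᵥ (fun p : Fin d × Fin d => u p.1 * v p.2 - v p.1 * u p.2)) := by
  rw [mul_assoc]
  set K := ((vecMulVec u (star u) - vecMulVec v (star v)) ⊗ₖ (vecMulVec u (star u) - vecMulVec v (star v))) with hKdef
  have hK : ∀ q p, ((1 - exchangeMatrix d) * K) q p = K q p - K (q.2, q.1) p := by
    intro q p
    rw [Matrix.sub_mul, Matrix.one_mul, Matrix.sub_apply, exchangeMatrix_mul_apply]
  have lhs : (V * ((1 - exchangeMatrix d) * K)).trace
      = ∑ p : Fin d × Fin d, ∑ q : Fin d × Fin d, V p q * (K q p - K (q.2, q.1) p) := by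
    simp only [Matrix.trace, Matrix.diag_apply, mul_apply (M := V), hK]
  rw [lhs]
  have rhs : (star (fun p : Fin d × Fin d => u p.1 * v p.2 - v p.1 * u p.2) ⬝ᵥ
        V *ᵥ (fun p : Fin d × Fin d => u p.1 * v p.2 - v p.1 * u p.2))
      = ∑ p : Fin d × Fin d, ∑ q : Fin d × Fin d,
          star (u p.1 * v p.2 - v p.1 * u p.2) * (V p q * (u q.1 * v q.2 - v q.1 * u q.2)) := by
    simp [dotProduct, mulVec, Finset.mul_sum]
  rw [rhs, ← Finset.sum_neg_distrib]
  refine Finset.sum_congr rfl fun p _ => ?_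
  rw [← Finset.sum_neg_distrib]
  refine Finset.sum_congr rfl fun q _ => ?_
  simp only [hKdef, kroneckerMap_apply, Matrix.sub_apply, vecMulVec_apply, Pi.star_apply,
    star_sub, star_mul']
  ring

lemma hf_expand {d : ℕ} (h : Matrix (Fin d) (Fin d) ℂ)
    (V : Matrix (Fin d × Fin d) (Fin d × Fin d) ℂ) (A Δ : Matrix (Fin d) (Fin d) ℂ) (c : ℝ) :
    hfEnergy h V (A + (c : ℂ) • Δ) = hfEnergy h V A
      + c * (((h * Δ).trace).re
          + (1/2) * (((V * (1 - exchangeMatrix d) * (A ⊗ₖ Δ)).trace).re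
              + ((V * (1 - exchangeMatrix d) * (Δ ⊗ₖ A)).trace).re))
      + c ^ 2 * ((1/2) * ((V * (1 - exchangeMatrix d) * (Δ ⊗ₖ Δ)).trace).re) := by
  simp only [hfEnergy, Matrix.add_kronecker, Matrix.kronecker_add, Matrix.smul_kronecker,
    Matrix.kronecker_smul, Matrix.mul_add, Matrix.mul_smul, mul_smul_comm, smul_smul,
    Matrix.trace_add, Matrix.trace_smul, smul_eq_mul, Complex.add_re, Complex.re_ofReal_mul,
    Complex.mul_re, Complex.ofReal_re, Complex.ofReal_im]
  ring

noncomputable def conf {d : ℕ} (U : Matrix (Fin d) (Fin d) ℂ) (μ : Fin d → ℝ) :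
    Matrix (Fin d) (Fin d) ℂ := U * diagonal (fun i => (μ i : ℂ)) * star U

lemma conf_comb {d : ℕ} (U : Matrix (Fin d) (Fin d) ℂ) (μ δ : Fin d → ℝ) (t : ℝ) :
    conf U (μ + t • δ) = conf U μ + (t : ℂ) • conf U δ := by
  unfold conf
  have hd : diagonal (fun i => (((μ + t • δ) i : ℝ) : ℂ))
      = diagonal (fun i => (μ i : ℂ)) + (t : ℂ) • diagonal (fun i => (δ i : ℂ)) := by
    ext k l
    rcases eq_or_ne k l with rfl | hkl
    · simp [Complex.ofReal_add, Complex.ofReal_mul]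
    · simp [diagonal_apply_ne _ hkl]
  rw [hd, mul_add, add_mul, mul_smul_comm, smul_mul_assoc]

lemma conf_sub {d : ℕ} (U : Matrix (Fin d) (Fin d) ℂ) (μ δ : Fin d → ℝ) :
    conf U (μ - δ) = conf U μ - conf U δ := by
  unfold conf
  have hd : diagonal (fun i => (((μ - δ) i : ℝ) : ℂ))
      = diagonal (fun i => (μ i : ℂ)) - diagonal (fun i => (δ i : ℂ)) := by
    ext k l
    rcases eq_or_ne k l with rfl | hkl
    · simp
    · simp [diagonal_apply_ne _ hkl]
  rw [hd, mul_sub, sub_mul]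

lemma conf_single {d : ℕ} (U : Matrix (Fin d) (Fin d) ℂ) (i : Fin d) :
    conf U (Pi.single i (1:ℝ))
      = vecMulVec (fun k => U k i) (star fun k => U k i) := by
  unfold conf
  ext k l
  simp [mul_apply, diagonal_apply, Pi.single_apply, vecMulVec_apply, star_apply,
    Finset.sum_ite_eq, apply_ite, mul_comm]

lemma cube_min {d : ℕ} (h : Matrix (Fin d) (Fin d) ℂ)
    (V : Matrix (Fin d × Fin d) (Fin d × Fin d) ℂ) (hV : V.PosSemidef)
    (U : Matrix (Fin d) (Fin d) ℂ) (N : ℕ) :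
    ∀ n : ℕ, ∀ μ : Fin d → ℝ,
      (Finset.univ.filter fun i => μ i ≠ 0 ∧ μ i ≠ 1).card = n →
      (∀ i, 0 ≤ μ i ∧ μ i ≤ 1) → (∑ i, μ i) = (N : ℝ) →
      ∃ ν : Fin d → ℝ, (∀ i, ν i = 0 ∨ ν i = 1) ∧ (∑ i, ν i) = (N : ℝ) ∧
        hfEnergy h V (conf U ν) ≤ hfEnergy h V (conf U μ) := by
  intro n
  induction n using Nat.strong_induction_on with
  | _ n IH =>
  intro μ hcard hbox hsum
  by_cases hfz : (Finset.univ.filter fun i => μ i ≠ 0 ∧ μ i ≠ 1) = ∅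
  · refine ⟨μ, fun i => ?_, hsum, le_refl _⟩
    by_contra hc
    push_neg at hc
    exact (Finset.eq_empty_iff_forall_notMem.mp hfz i)
      (Finset.mem_filter.mpr ⟨Finset.mem_univ i, hc⟩)
  · obtain ⟨i, hi⟩ := Finset.nonempty_of_ne_empty hfz
    have hi' := (Finset.mem_filter.mp hi).2
    have h0i : 0 < μ i := lt_of_le_of_ne (hbox i).1 (Ne.symm hi'.1)
    have h1i : μ i < 1 := lt_of_le_of_ne (hbox i).2 hi'.2
    have hj : ∃ j, j ≠ i ∧ μ j ≠ 0 ∧ μ j ≠ 1 := by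
      by_contra hc
      push_neg at hc
      have hval : ∀ k ∈ Finset.univ.erase i, μ k = (if μ k = 1 then (1:ℝ) else 0) := by
        intro k hk
        have hki : k ≠ i := (Finset.mem_erase.mp hk).1
        by_cases hk0 : μ k = 0
        · have : μ k ≠ 1 := by rw [hk0]; norm_num
          simp [hk0, this]
        · simp [hc k hki hk0]
      have hsplit : μ i + ∑ k ∈ Finset.univ.erase i, μ k = ∑ k, μ k :=
        Finset.add_sum_erase _ _ (Finset.mem_univ i)
      have hcount : (∑ k ∈ Finset.univ.erase i, μ k)
          = (((Finset.univ.erase i).filter fun k => μ k = 1).card : ℝ) := by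
        rw [Finset.sum_congr rfl hval, Finset.sum_boole]
      set m := ((Finset.univ.erase i).filter fun k => μ k = 1).card
      have hμi : μ i = (N : ℝ) - m := by
        rw [hcount] at hsplit; rw [hsum] at hsplit; linarith
      have hlt : (m : ℝ) < N := by linarith
      have hgt : (N : ℝ) < m + 1 := by linarith
      have hlt' : m < N := by exact_mod_cast hlt
      have hgt' : N < m + 1 := by exact_mod_cast hgt
      omega
    obtain ⟨j, hji, hj0, hj1⟩ := hj
    have h0j : 0 < μ j := lt_of_le_of_ne (hbox j).1 (Ne.symm hj0)
    have h1j : μ j < 1 := lt_of_le_of_ne (hbox j).2 hj1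
    have hjmem : j ∈ Finset.univ.filter fun k => μ k ≠ 0 ∧ μ k ≠ 1 :=
      Finset.mem_filter.mpr ⟨Finset.mem_univ j, hj0, hj1⟩
    obtain ⟨δ, hδdef⟩ : ∃ δ : Fin d → ℝ, δ = Pi.single i 1 - Pi.single j 1 := ⟨_, rfl⟩
    have hδi : δ i = 1 := by simp [hδdef, Pi.single_apply, hji.symm]
    have hδj : δ j = -1 := by simp [hδdef, Pi.single_apply, hji]
    have hδk : ∀ k, k ≠ i → k ≠ j → δ k = 0 := by
      intro k hki hkj; simp [hδdef, Pi.single_apply, hki, hkj]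
    obtain ⟨Δ, hΔdef⟩ : ∃ Δ : Matrix (Fin d) (Fin d) ℂ, Δ = conf U δ := ⟨_, rfl⟩
    have hΔ : Δ = vecMulVec (fun k => U k i) (star fun k => U k i)
        - vecMulVec (fun k => U k j) (star fun k => U k j) := by
      rw [hΔdef, hδdef, conf_sub, conf_single, conf_single]
    obtain ⟨q, hqdef⟩ : ∃ q : ℝ,
        q = ((V * (1 - exchangeMatrix d) * (Δ ⊗ₖ Δ)).trace).re := ⟨_, rfl⟩
    have hq : q ≤ 0 := by
      rw [hqdef, hΔ, key_trace]
      have hpos := hV.dotProduct_mulVec_nonneg (fun p : Fin d × Fin d => U p.1 i * U p.2 j - U p.1 j * U p.2 i)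
      have hre : 0 ≤ (star (fun p : Fin d × Fin d => U p.1 i * U p.2 j - U p.1 j * U p.2 i) ⬝ᵥ
          V *ᵥ (fun p : Fin d × Fin d => U p.1 i * U p.2 j - U p.1 j * U p.2 i)).re := by
        have := (Complex.le_def.mp hpos).1
        simpa using this
      simpa using hre
    obtain ⟨β, hβdef⟩ : ∃ β : ℝ, β = ((h * Δ).trace).re
        + (1/2) * (((V * (1 - exchangeMatrix d) * ((conf U μ) ⊗ₖ Δ)).trace).re
            + ((V * (1 - exchangeMatrix d) * (Δ ⊗ₖ (conf U μ))).trace).re) := ⟨_, rfl⟩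
    obtain ⟨t, htdef⟩ : ∃ t : ℝ,
        t = if 0 ≤ β then -(min (μ i) (1 - μ j)) else min (1 - μ i) (μ j) := ⟨_, rfl⟩
    have hmin1 : (0:ℝ) ≤ min (μ i) (1 - μ j) := le_min (by linarith) (by linarith)
    have hmin2 : (0:ℝ) ≤ min (1 - μ i) (μ j) := le_min (by linarith) (by linarith)
    have htβ : t * β ≤ 0 := by
      rcases le_or_gt 0 β with hb | hb
      · have htv : t = -(min (μ i) (1 - μ j)) := by rw [htdef, if_pos hb]
        have ht : t ≤ 0 := by rw [htv]; linarith
        exact mul_nonpos_of_nonpos_of_nonneg ht hb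
      · have htv : t = min (1 - μ i) (μ j) := by rw [htdef, if_neg (not_le.mpr hb)]
        have ht : 0 ≤ t := by rw [htv]; linarith
        exact mul_nonpos_of_nonneg_of_nonpos ht (le_of_lt hb)
    have hti0 : -(μ i) ≤ t := by
      rw [htdef]; split
      · have := min_le_left (μ i) (1 - μ j); linarith
      · linarith
    have hti1 : t ≤ 1 - μ i := by
      rw [htdef]; split
      · linarith
      · exact min_le_left _ _
    have htj0 : t ≤ μ j := by
      rw [htdef]; split
      · linarith
      · exact min_le_right _ _
    have htj1 : μ j - 1 ≤ t := by
      rw [htdef]; split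
      · have := min_le_right (μ i) (1 - μ j); linarith
      · linarith
    obtain ⟨μ', hμ'def⟩ : ∃ μ' : Fin d → ℝ, μ' = μ + t • δ := ⟨_, rfl⟩
    have hμ'i : μ' i = μ i + t := by simp [hμ'def, hδi]
    have hμ'j : μ' j = μ j - t := by simp [hμ'def, hδj]; ring
    have hμ'k : ∀ k, k ≠ i → k ≠ j → μ' k = μ k := by
      intro k hki hkj; simp [hμ'def, hδk k hki hkj]
    have hbox' : ∀ k, 0 ≤ μ' k ∧ μ' k ≤ 1 := by
      intro k
      rcases eq_or_ne k i with rfl | hki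
      · rw [hμ'i]; constructor <;> linarith
      rcases eq_or_ne k j with rfl | hkj
      · rw [hμ'j]; constructor <;> linarith
      · rw [hμ'k k hki hkj]; exact hbox k
    have hsum' : (∑ k, μ' k) = (N : ℝ) := by
      simp only [hμ'def, Pi.add_apply, Pi.smul_apply, smul_eq_mul, Finset.sum_add_distrib,
        ← Finset.mul_sum]
      have : (∑ k, δ k) = 0 := by
        simp [hδdef, Finset.sum_sub_distrib, Finset.sum_pi_single']
      rw [this, hsum]; ring
    have hsub : (Finset.univ.filter fun k => μ' k ≠ 0 ∧ μ' k ≠ 1)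
        ⊆ Finset.univ.filter fun k => μ k ≠ 0 ∧ μ k ≠ 1 := by
      intro k hk
      have hk' := (Finset.mem_filter.mp hk).2
      rcases eq_or_ne k i with rfl | hki
      · exact hi
      rcases eq_or_ne k j with rfl | hkj
      · exact hjmem
      · rw [hμ'k k hki hkj] at hk'
        exact Finset.mem_filter.mpr ⟨Finset.mem_univ k, hk'⟩
    have hstrict : ∃ k, k ∈ (Finset.univ.filter fun k => μ k ≠ 0 ∧ μ k ≠ 1) ∧
        k ∉ (Finset.univ.filter fun k => μ' k ≠ 0 ∧ μ' k ≠ 1) := by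
      rcases le_or_gt 0 β with hb | hb
      · have htv : t = -(min (μ i) (1 - μ j)) := by rw [htdef, if_pos hb]
        rcases le_total (μ i) (1 - μ j) with hc | hc
        · refine ⟨i, hi, ?_⟩
          have hz : μ' i = 0 := by rw [hμ'i, htv, min_eq_left hc]; ring
          simp [Finset.mem_filter, hz]
        · refine ⟨j, hjmem, ?_⟩
          have hz : μ' j = 1 := by rw [hμ'j, htv, min_eq_right hc]; ring
          simp [Finset.mem_filter, hz]
      · have htv : t = min (1 - μ i) (μ j) := by rw [htdef, if_neg (not_le.mpr hb)]
        rcases le_total (1 - μ i) (μ j) with hc | hc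
        · refine ⟨i, hi, ?_⟩
          have hz : μ' i = 1 := by rw [hμ'i, htv, min_eq_left hc]; ring
          simp [Finset.mem_filter, hz]
        · refine ⟨j, hjmem, ?_⟩
          have hz : μ' j = 0 := by rw [hμ'j, htv, min_eq_right hc]; ring
          simp [Finset.mem_filter, hz]
    have hcard' : (Finset.univ.filter fun k => μ' k ≠ 0 ∧ μ' k ≠ 1).card < n := by
      rw [← hcard]
      apply Finset.card_lt_card
      obtain ⟨k, hk1, hk2⟩ := hstrict
      exact (Finset.ssubset_iff_of_subset hsub).mpr ⟨k, hk1, hk2⟩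
    have henergy : hfEnergy h V (conf U μ') ≤ hfEnergy h V (conf U μ) := by
      rw [hμ'def, conf_comb, ← hΔdef, hf_expand, ← hβdef, ← hqdef]
      have h2 : t ^ 2 * ((1/2) * q) ≤ 0 := by
        apply mul_nonpos_of_nonneg_of_nonpos (sq_nonneg t)
        linarith
      linarith
    obtain ⟨ν, hν1, hν2, hν3⟩ := IH _ hcard' μ' rfl hbox' hsum'
    exact ⟨ν, hν1, hν2, le_trans hν3 henergy⟩

lemma conf_trace {d : ℕ} (U : Matrix (Fin d) (Fin d) ℂ) (hU2 : star U * U = 1)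
    (μ : Fin d → ℝ) : (conf U μ).trace = ∑ i, (μ i : ℂ) := by
  unfold conf
  rw [trace_mul_cycle, hU2, one_mul, trace_diagonal]

lemma conf_isHermitian {d : ℕ} (U : Matrix (Fin d) (Fin d) ℂ) (μ : Fin d → ℝ) :
    (conf U μ).IsHermitian := by
  unfold conf
  have hD : (diagonal fun i => ((μ i : ℝ) : ℂ)).IsHermitian := by
    rw [Matrix.IsHermitian, diagonal_conjTranspose]
    ext k l
    rcases eq_or_ne k l with rfl | hkl
    · simp [Complex.conj_ofReal]
    · simp [diagonal_apply_ne _ hkl]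
  have := Matrix.isHermitian_mul_mul_conjTranspose U hD
  simpa [Matrix.star_eq_conjTranspose] using this

lemma conf_mul {d : ℕ} (U : Matrix (Fin d) (Fin d) ℂ) (hU2 : star U * U = 1)
    (μ ν : Fin d → ℝ) : conf U μ * conf U ν = conf U (fun k => μ k * ν k) := by
  unfold conf
  simp only [← mul_assoc]
  rw [mul_assoc (U * diagonal fun i => ((μ i : ℝ) : ℂ)) (star U) U, hU2, mul_one,
    mul_assoc U (diagonal fun i => ((μ i : ℝ) : ℂ)), diagonal_mul_diagonal]
  congr 2
  funext k
  push_cast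
  ring

lemma proj_psd {d : ℕ} (P : Matrix (Fin d) (Fin d) ℂ) (hH : P.IsHermitian)
    (hP2 : P * P = P) : P.PosSemidef := by
  have h : Pᴴ * P = P := by rw [hH.eq]; exact hP2
  exact h ▸ posSemidef_conjTranspose_mul_self P

lemma proj_admissible {d : ℕ} (P : Matrix (Fin d) (Fin d) ℂ) (hH : P.IsHermitian)
    (hP2 : P * P = P) : HFAdmissible P := by
  refine ⟨proj_psd P hH hP2, proj_psd _ ?_ ?_⟩
  · exact (isHermitian_one).sub hH
  · simp only [Matrix.sub_mul, Matrix.mul_sub, Matrix.one_mul, Matrix.mul_one, hP2]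
    abel

lemma key_step {d N : ℕ} (h : Matrix (Fin d) (Fin d) ℂ)
    (V : Matrix (Fin d × Fin d) (Fin d × Fin d) ℂ) (hV : V.PosSemidef)
    (γ : Matrix (Fin d) (Fin d) ℂ) (hγ : HFAdmissible γ) (htr : γ.trace = (N : ℂ)) :
    ∃ P : Matrix (Fin d) (Fin d) ℂ, P.IsHermitian ∧ P * P = P ∧ P.trace = (N : ℂ) ∧
      hfEnergy h V P ≤ hfEnergy h V γ := by
  have hγH : γ.IsHermitian := hγ.1.1
  set U : Matrix (Fin d) (Fin d) ℂ := (Matrix.IsHermitian.eigenvectorUnitary hγH :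
    Matrix (Fin d) (Fin d) ℂ) with hUdef
  have hUmem : U ∈ Matrix.unitaryGroup (Fin d) ℂ := (Matrix.IsHermitian.eigenvectorUnitary hγH).2
  have hU2 : star U * U = 1 := (Matrix.mem_unitaryGroup_iff').mp hUmem
  set lam : Fin d → ℝ := hγH.eigenvalues with hlamdef
  have hspec : γ = conf U lam := hγH.spectral_theorem
  have hD : star U * γ * U = diagonal (fun i => (lam i : ℂ)) := by
    rw [hspec]
    unfold conf
    simp only [← mul_assoc]
    rw [hU2, one_mul, mul_assoc, hU2, mul_one]
  have h1mD : star U * ((1 : Matrix (Fin d) (Fin d) ℂ) - γ) * U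
      = 1 - diagonal (fun i => (lam i : ℂ)) := by
    rw [Matrix.mul_sub, Matrix.sub_mul, Matrix.mul_one, hU2, hD]
  have hpsd1mD : ((1 : Matrix (Fin d) (Fin d) ℂ) - diagonal (fun i => (lam i : ℂ))).PosSemidef := by
    have := hγ.2.conjTranspose_mul_mul_same U
    rw [← Matrix.star_eq_conjTranspose, h1mD] at this
    exact this
  have hbox : ∀ i, 0 ≤ lam i ∧ lam i ≤ 1 := by
    intro i
    refine ⟨hγ.1.eigenvalues_nonneg i, ?_⟩
    have h3 := (Complex.le_def.mp (hpsd1mD.dotProduct_mulVec_nonneg (Pi.single i 1))).1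
    have hdg : (1 : Matrix (Fin d) (Fin d) ℂ) - diagonal (fun k => (lam k : ℂ))
        = diagonal (fun k => 1 - (lam k : ℂ)) := by
      rw [← Matrix.diagonal_one, diagonal_sub]
    have h4 : (star (Pi.single i 1 : Fin d → ℂ) ⬝ᵥ
        ((1 : Matrix (Fin d) (Fin d) ℂ) - diagonal (fun k => (lam k : ℂ))) *ᵥ Pi.single i 1)
        = 1 - (lam i : ℂ) := by
      rw [hdg]
      simp [dotProduct, mulVec, Pi.single_apply, diagonal_apply, Finset.sum_ite_eq, apply_ite]
    rw [h4] at h3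
    have h5 : (0:ℝ) ≤ 1 - lam i := by simpa using h3
    linarith
  have hsumlam : (∑ i, lam i) = (N : ℝ) := by
    have h1 : γ.trace = ∑ i, (lam i : ℂ) := by rw [hspec, conf_trace U hU2]
    rw [htr] at h1
    have h2 := congrArg Complex.re h1.symm
    simpa [Complex.re_sum] using h2
  obtain ⟨ν, hν1, hν2, hν3⟩ := cube_min h V hV U N _ lam rfl hbox hsumlam
  refine ⟨conf U ν, conf_isHermitian U ν, ?_, ?_, ?_⟩
  · have hνν : (fun k => ν k * ν k) = ν := by
      funext k; rcases hν1 k with h0 | h0 <;> rw [h0] <;> ring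
    rw [conf_mul U hU2, hνν]
  · rw [conf_trace U hU2]
    have hc : (∑ i, (ν i : ℂ)) = ((∑ i, ν i : ℝ) : ℂ) := by push_cast; ring
    rw [hc, hν2]; norm_num
  · rw [hspec]; exact hν3

lemma exists_projection {d N : ℕ} (hNd : N ≤ d) :
    ∃ P : Matrix (Fin d) (Fin d) ℂ, P.IsHermitian ∧ P * P = P ∧ P.trace = (N : ℂ) := by
  refine ⟨diagonal (fun i : Fin d => if (i : ℕ) < N then (1:ℂ) else 0), ?_, ?_, ?_⟩
  · rw [Matrix.IsHermitian, diagonal_conjTranspose]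
    ext k l
    rcases eq_or_ne k l with rfl | hkl
    · simp [apply_ite]
    · simp [diagonal_apply_ne _ hkl]
  · have hf : (fun i : Fin d => (if (i:ℕ) < N then (1:ℂ) else 0) * (if (i:ℕ) < N then (1:ℂ) else 0))
        = fun i : Fin d => if (i:ℕ) < N then (1:ℂ) else 0 := by
      funext k; by_cases hk : (k:ℕ) < N <;> simp [hk]
    rw [diagonal_mul_diagonal, hf]
  · rw [trace_diagonal, Fin.sum_univ_eq_sum_range (fun i => if i < N then (1:ℂ) else 0) d,
      ← Finset.sum_subset (Finset.range_subset_range.mpr hNd)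
        (fun x _ hx => if_neg (by simpa [Finset.mem_range] using hx))]
    have h1 : ∀ x ∈ Finset.range N, (if x < N then (1:ℂ) else 0) = 1 :=
      fun x hx => if_pos (Finset.mem_range.mp hx)
    rw [Finset.sum_congr rfl h1, Finset.sum_const, Finset.card_range, nsmul_eq_mul, mul_one]

/-- **Lieb's variational principle** (finite-dimensional form): relaxing the projection
constraint `γ = γ²` to `0 ⪯ γ ⪯ 1` does not change the Hartree–Fock ground state energy. -/
theorem lieb_variational_principle (d N : ℕ) (hd : 1 ≤ d) (hN1 : 1 ≤ N) (hNd : N ≤ d)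
    (h : Matrix (Fin d) (Fin d) ℂ) (hh : h.IsHermitian)
    (V : Matrix (Fin d × Fin d) (Fin d × Fin d) ℂ) (hV : V.PosSemidef)
    (hVEx : exchangeMatrix d * V * exchangeMatrix d = V) :
    sInf {e : ℝ | ∃ γ : Matrix (Fin d) (Fin d) ℂ,
        HFAdmissible γ ∧ γ.trace = (N : ℂ) ∧ e = hfEnergy h V γ}
      = sInf {e : ℝ | ∃ γ : Matrix (Fin d) (Fin d) ℂ,
        γ.IsHermitian ∧ γ * γ = γ ∧ γ.trace = (N : ℂ) ∧ e = hfEnergy h V γ} := by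
  set S1 := {e : ℝ | ∃ γ : Matrix (Fin d) (Fin d) ℂ,
      HFAdmissible γ ∧ γ.trace = (N : ℂ) ∧ e = hfEnergy h V γ} with hS1
  set S2 := {e : ℝ | ∃ γ : Matrix (Fin d) (Fin d) ℂ,
      γ.IsHermitian ∧ γ * γ = γ ∧ γ.trace = (N : ℂ) ∧ e = hfEnergy h V γ} with hS2
  obtain ⟨P0, hh0, hp0, ht0⟩ := exists_projection (d := d) (N := N) hNd
  have hne2 : S2.Nonempty := ⟨hfEnergy h V P0, P0, hh0, hp0, ht0, rfl⟩
  have hsub : S2 ⊆ S1 := by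
    rintro e ⟨P, hH, hP2, htr, rfl⟩
    exact ⟨P, proj_admissible P hH hP2, htr, rfl⟩
  have hne1 : S1.Nonempty := hne2.mono hsub
  have hdom : ∀ e ∈ S1, ∃ e' ∈ S2, e' ≤ e := by
    rintro e ⟨γ, hadm, htr, rfl⟩
    obtain ⟨P, h1, h2, h3, h4⟩ := key_step h V hV γ hadm htr
    exact ⟨hfEnergy h V P, ⟨P, h1, h2, h3, rfl⟩, h4⟩
  by_cases hbdd : BddBelow S2
  · have hbdd1 : BddBelow S1 := by
      obtain ⟨b, hb⟩ := hbdd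
      refine ⟨b, fun e he => ?_⟩
      obtain ⟨e', he', hle⟩ := hdom e he
      exact le_trans (hb he') hle
    apply le_antisymm
    · exact csInf_le_csInf hbdd1 hne2 hsub
    · refine le_csInf hne1 fun e he => ?_
      obtain ⟨e', he', hle⟩ := hdom e he
      exact le_trans (csInf_le hbdd he') hle
  · have hbdd1 : ¬ BddBelow S1 := fun hb => hbdd (hb.mono hsub)
    rw [Real.sInf_of_not_bddBelow hbdd1, Real.sInf_of_not_bddBelow hbdd]
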